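/- Let Z = ∂/∂z + i z̄ ∂/∂u and Z̄ = ∂/∂z̄ − i z ∂/∂u, and let P₃ := Z Z Z̄. For (z,u) ≠ (0,0), P₃(log(|z|⁴ + u²)) = 0. Equivalently, P₃(log ρ) = 0 where ρ = (|z|⁴+u²)^{1/4}. -/

import Mathlib

open Complex

/-- The CR vector field Z = ∂/∂z + i z̄ ∂/∂u on the Heisenberg group ℂ × ℝ,
where ∂/∂z = ½(∂/∂x − i ∂/∂y) is the Wirtinger derivative. -/
noncomputable def Zop (f : ℂ × ℝ → ℂ) : ℂ × ℝ → ℂ := fun p =>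
  (1 / 2 : ℂ) * (fderiv ℝ f p (1, 0) - Complex.I * fderiv ℝ f p (Complex.I, 0))
    + Complex.I * (starRingEnd ℂ p.1) * fderiv ℝ f p (0, 1)

/-- The CR vector field Z̄ = ∂/∂z̄ − i z ∂/∂u on the Heisenberg group ℂ × ℝ,
where ∂/∂z̄ = ½(∂/∂x + i ∂/∂y). -/
noncomputable def Zbar (f : ℂ × ℝ → ℂ) : ℂ × ℝ → ℂ := fun p =>
  (1 / 2 : ℂ) * (fderiv ℝ f p (1, 0) + Complex.I * fderiv ℝ f p (Complex.I, 0))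
    - Complex.I * p.1 * fderiv ℝ f p (0, 1)

/-- The vector field T = ∂/∂u. -/
noncomputable def Tder (f : ℂ × ℝ → ℂ) : ℂ × ℝ → ℂ := fun p => fderiv ℝ f p (0, 1)

/-- The sublaplacian Δ_b = Z Z̄ + Z̄ Z. -/
noncomputable def Lapb (f : ℂ × ℝ → ℂ) : ℂ × ℝ → ℂ := fun p =>
  Zop (Zbar f) p + Zbar (Zop f) p

noncomputable def wfun (q : ℂ × ℝ) : ℝ :=
  (q.1.re*q.1.re + q.1.im*q.1.im)*(q.1.re*q.1.re + q.1.im*q.1.im) + q.2*q.2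

noncomputable def Afun (q : ℂ × ℝ) : ℂ := ((q.1.re*q.1.re + q.1.im*q.1.im : ℝ) : ℂ) + I * (q.2 : ℂ)

lemma wfun_pos {q : ℂ × ℝ} (hq : q ≠ 0) : 0 < wfun q := by
  have h : q.1.re ≠ 0 ∨ q.1.im ≠ 0 ∨ q.2 ≠ 0 := by
    by_contra h
    push_neg at h
    exact hq (Prod.ext (Complex.ext h.1 h.2.1) h.2.2)
  unfold wfun
  rcases h with h | h | h <;>
    nlinarith [mul_self_pos.mpr h, mul_self_nonneg q.1.re, mul_self_nonneg q.1.im,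
      mul_self_nonneg q.2, mul_self_nonneg (q.1.re*q.1.re + q.1.im*q.1.im)]

lemma Afun_ne {q : ℂ × ℝ} (hq : q ≠ 0) : Afun q ≠ 0 := by
  intro h
  apply hq
  have hre : (Afun q).re = q.1.re*q.1.re + q.1.im*q.1.im := by simp [Afun]
  have him : (Afun q).im = q.2 := by simp [Afun]
  rw [h] at hre him
  simp at hre him
  have h1 : q.1.re = 0 := by nlinarith
  have h2 : q.1.im = 0 := by nlinarith
  exact Prod.ext (Complex.ext h1 h2) him.symm

-- derivative of s q = q.1.re*q.1.re + q.1.im*q.1.im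
lemma hasFDeriv_s (q : ℂ × ℝ) :
    HasFDerivAt (fun q : ℂ × ℝ => q.1.re*q.1.re + q.1.im*q.1.im)
      ((2*q.1.re) • (Complex.reCLM.comp (ContinuousLinearMap.fst ℝ ℂ ℝ))
        + (2*q.1.im) • (Complex.imCLM.comp (ContinuousLinearMap.fst ℝ ℂ ℝ))) q := by
  have hre : HasFDerivAt (fun q : ℂ × ℝ => q.1.re)
      (Complex.reCLM.comp (ContinuousLinearMap.fst ℝ ℂ ℝ)) q :=
    (Complex.reCLM.comp (ContinuousLinearMap.fst ℝ ℂ ℝ)).hasFDerivAt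
  have him : HasFDerivAt (fun q : ℂ × ℝ => q.1.im)
      (Complex.imCLM.comp (ContinuousLinearMap.fst ℝ ℂ ℝ)) q :=
    (Complex.imCLM.comp (ContinuousLinearMap.fst ℝ ℂ ℝ)).hasFDerivAt
  have := (hre.mul hre).add (him.mul him)
  convert this using 1 <;> ext v <;> simp <;> ring

lemma hasFDeriv_w (q : ℂ × ℝ) :
    HasFDerivAt wfun
      ((2*(q.1.re*q.1.re + q.1.im*q.1.im)) • ((2*q.1.re) • (Complex.reCLM.comp (ContinuousLinearMap.fst ℝ ℂ ℝ))
        + (2*q.1.im) • (Complex.imCLM.comp (ContinuousLinearMap.fst ℝ ℂ ℝ)))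
        + (2*q.2) • (ContinuousLinearMap.snd ℝ ℂ ℝ)) q := by
  have hs := hasFDeriv_s q
  have hu : HasFDerivAt (fun q : ℂ × ℝ => q.2) (ContinuousLinearMap.snd ℝ ℂ ℝ) q :=
    hasFDerivAt_snd
  have := (hs.mul hs).add (hu.mul hu)
  convert this using 1 <;> ext v <;> simp [wfun] <;> ring

lemma zbar_step (c : ℂ) {q : ℂ × ℝ} (hq : q ≠ 0) :
    Zbar (fun q => c * ((Real.log (wfun q) : ℝ) : ℂ)) q = 2*c*q.1*(Afun q)⁻¹ := by
  have hw0 : wfun q ≠ 0 := (wfun_pos hq).ne'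
  have hA0 := Afun_ne hq
  have hF : HasFDerivAt (fun q : ℂ × ℝ => c * ((Real.log (wfun q) : ℝ) : ℂ))
      ((c • Complex.ofRealCLM).comp ((wfun q)⁻¹ • ((2*(q.1.re*q.1.re + q.1.im*q.1.im)) • ((2*q.1.re) • (Complex.reCLM.comp (ContinuousLinearMap.fst ℝ ℂ ℝ))
        + (2*q.1.im) • (Complex.imCLM.comp (ContinuousLinearMap.fst ℝ ℂ ℝ)))
        + (2*q.2) • (ContinuousLinearMap.snd ℝ ℂ ℝ)))) q := by
    exact ((Complex.ofRealCLM.hasFDerivAt.comp q ((hasFDeriv_w q).log hw0)).const_mul c)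
  simp only [Zbar, hF.fderiv]
  simp only [ContinuousLinearMap.add_apply, ContinuousLinearMap.smul_apply,
    ContinuousLinearMap.comp_apply, ContinuousLinearMap.coe_comp',
    Function.comp_apply, ContinuousLinearMap.coe_fst', ContinuousLinearMap.coe_snd',
    Complex.ofRealCLM_apply, Complex.reCLM_apply, Complex.imCLM_apply,
    smul_eq_mul, Complex.real_smul]
  have hw0c : ((wfun q : ℝ) : ℂ) ≠ 0 := by exact_mod_cast hw0
  simp only [Complex.I_re, Complex.I_im, Complex.one_re, Complex.one_im,
    Complex.zero_re, Complex.zero_im]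
  push_cast
  field_simp [hA0, hw0c]
  simp only [Complex.ext_iff, wfun, Afun]
  push_cast
  simp [Complex.ext_iff, ← Complex.ofReal_pow]
  constructor <;> ring

lemma hasFDeriv_A (q : ℂ × ℝ) :
    HasFDerivAt Afun
      ((Complex.ofRealCLM.comp ((2*q.1.re) • (Complex.reCLM.comp (ContinuousLinearMap.fst ℝ ℂ ℝ))
        + (2*q.1.im) • (Complex.imCLM.comp (ContinuousLinearMap.fst ℝ ℂ ℝ))))
        + I • (Complex.ofRealCLM.comp (ContinuousLinearMap.snd ℝ ℂ ℝ))) q :=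
  (Complex.ofRealCLM.hasFDerivAt.comp q (hasFDeriv_s q)).add
    ((Complex.ofRealCLM.hasFDerivAt.comp q hasFDerivAt_snd).const_mul I)

lemma hasFDeriv_Ainv {q : ℂ × ℝ} (hq : q ≠ 0) :
    HasFDerivAt (fun q => (Afun q)⁻¹)
      ((-(Afun q ^ 2)⁻¹) • ((Complex.ofRealCLM.comp ((2*q.1.re) • (Complex.reCLM.comp (ContinuousLinearMap.fst ℝ ℂ ℝ))
        + (2*q.1.im) • (Complex.imCLM.comp (ContinuousLinearMap.fst ℝ ℂ ℝ))))
        + I • (Complex.ofRealCLM.comp (ContinuousLinearMap.snd ℝ ℂ ℝ)))) q :=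
  (hasDerivAt_inv (Afun_ne hq)).comp_hasFDerivAt q (hasFDeriv_A q)

lemma zop_step2 (c : ℂ) {q : ℂ × ℝ} (hq : q ≠ 0) :
    Zop (fun q => 2*c*q.1*(Afun q)⁻¹) q = 2*c*(Afun q)⁻¹ := by
  have hA0 := Afun_ne hq
  have hg : HasFDerivAt (fun q : ℂ × ℝ => 2*c*q.1*(Afun q)⁻¹) _ q :=
    (hasFDerivAt_fst.const_mul (2*c)).mul (hasFDeriv_Ainv hq)
  simp only [Zop, hg.fderiv]
  simp only [ContinuousLinearMap.add_apply, ContinuousLinearMap.smul_apply,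
    ContinuousLinearMap.comp_apply, ContinuousLinearMap.coe_comp',
    Function.comp_apply, ContinuousLinearMap.coe_fst', ContinuousLinearMap.coe_snd',
    Complex.ofRealCLM_apply, Complex.reCLM_apply, Complex.imCLM_apply,
    smul_eq_mul, Complex.real_smul]
  simp only [Complex.I_re, Complex.I_im, Complex.one_re, Complex.one_im,
    Complex.zero_re, Complex.zero_im]
  push_cast
  field_simp [hA0]
  simp only [Complex.ext_iff, Afun]
  push_cast
  simp [Complex.ext_iff]
  constructor <;> ring

lemma zop_step3 (c : ℂ) {q : ℂ × ℝ} (hq : q ≠ 0) :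
    Zop (fun q => 2*c*(Afun q)⁻¹) q = 0 := by
  have hA0 := Afun_ne hq
  have hh := (hasFDeriv_Ainv hq).const_mul (2*c)
  simp only [Zop, hh.fderiv]
  simp only [ContinuousLinearMap.add_apply, ContinuousLinearMap.smul_apply,
    ContinuousLinearMap.comp_apply, ContinuousLinearMap.coe_comp',
    Function.comp_apply, ContinuousLinearMap.coe_fst', ContinuousLinearMap.coe_snd',
    Complex.ofRealCLM_apply, Complex.reCLM_apply, Complex.imCLM_apply,
    smul_eq_mul, Complex.real_smul]
  simp only [Complex.I_re, Complex.I_im, Complex.one_re, Complex.one_im,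
    Complex.zero_re, Complex.zero_im]
  push_cast
  field_simp [hA0]
  simp only [Complex.ext_iff, Afun]
  push_cast
  simp [Complex.ext_iff]

lemma Zop_congr {f g : ℂ × ℝ → ℂ} {q : ℂ × ℝ} (h : f =ᶠ[nhds q] g) :
    Zop f q = Zop g q := by
  simp only [Zop, h.fderiv_eq]

lemma Zbar_congr {f g : ℂ × ℝ → ℂ} {q : ℂ × ℝ} (h : f =ᶠ[nhds q] g) :
    Zbar f q = Zbar g q := by
  simp only [Zbar, h.fderiv_eq]

lemma wfun_eq (q : ℂ × ℝ) : (‖q.1‖) ^ 4 + q.2 ^ 2 = wfun q := by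
  have h4 : (‖q.1‖) ^ 4 = ((‖q.1‖) ^ 2) ^ 2 := by ring
  rw [h4, Complex.sq_norm, Complex.normSq_apply]
  unfold wfun
  ring

lemma chain (c : ℂ) {p : ℂ × ℝ} (hp : p ≠ 0) :
    Zop (Zop (Zbar (fun q => c * ((Real.log (wfun q) : ℝ) : ℂ)))) p = 0 := by
  have h2 : ∀ {q : ℂ × ℝ}, q ≠ 0 →
      Zop (Zbar (fun q => c * ((Real.log (wfun q) : ℝ) : ℂ))) q = 2*c*(Afun q)⁻¹ := by
    intro q hq
    rw [Zop_congr ((eventually_ne_nhds hq).mono (fun r hr => zbar_step c hr))]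
    exact zop_step2 c hq
  rw [Zop_congr ((eventually_ne_nhds hp).mono (fun r hr => h2 hr))]
  exact zop_step3 c hp

/-- For (z,u) ≠ (0,0): P₃(log(|z|⁴+u²)) = 0 where P₃ = Z Z Z̄;
equivalently P₃(log ρ) = 0 with ρ = (|z|⁴+u²)^{1/4}. -/
theorem P3_log_rho_vanishes (p : ℂ × ℝ) (hp : p ≠ 0) :
    Zop (Zop (Zbar (fun q =>
        ((Real.log ((‖q.1‖) ^ 4 + q.2 ^ 2) : ℝ) : ℂ)))) p = 0 ∧
    Zop (Zop (Zbar (fun q =>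
        ((Real.log (((‖q.1‖) ^ 4 + q.2 ^ 2) ^ ((1 : ℝ) / 4)) : ℝ) : ℂ)))) p = 0 := by
  constructor
  · have e1 : (fun q : ℂ × ℝ => ((Real.log ((‖q.1‖) ^ 4 + q.2 ^ 2) : ℝ) : ℂ))
        = fun q => (1 : ℂ) * ((Real.log (wfun q) : ℝ) : ℂ) := by
      funext q
      rw [one_mul, wfun_eq]
    rw [e1]
    exact chain 1 hp
  · have e2 : (fun q : ℂ × ℝ =>
        ((Real.log (((‖q.1‖) ^ 4 + q.2 ^ 2) ^ ((1 : ℝ) / 4)) : ℝ) : ℂ))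
        = fun q => ((1 : ℂ)/4) * ((Real.log (wfun q) : ℝ) : ℂ) := by
      funext q
      rcases eq_or_ne q 0 with rfl | hq
      · norm_num [wfun, Real.zero_rpow]
      · rw [wfun_eq, Real.log_rpow (wfun_pos hq)]
        push_cast
        ring
    rw [e2]
    exact chain (1/4) hp
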